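/- arXiv:0902.3839 — 2 statements merged into one kernel-verified Lean document; each statement's English description precedes it below -/
import Mathlib

section
/- Let K_{a+1} = 1 ≤ K_a < K_{a-1} < ⋯ < K_1 < K_0 = +∞ be real numbers with K_j > K_{j+1}^a for j = 1,…,a. For y = (y_1,…,y_a) ∈ ℝ_{>0}^a define ξ_j = y_j/y_{j+1} for j < a and ξ_a = y_a. Suppose y satisfies ξ_1 ≥ 1, …, ξ_{a-1} ≥ 1 (i.e., y_1 ≥ y_2 ≥ ⋯ ≥ y_a) and y_a > K_1 + 1. Then there exist an index 1 < l ≤ a+1 and a nonempty subset I = {i_1 < i_2 < ⋯ < i_r} ⊆ {1,…,a} with i_r = a such that: ξ_j ≤ K_l for all j ∉ I, and ξ_j > K_{l-1} for all j ∈ I. -/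
/-- The combinatorial covering lemma (Section 4): given constants
`1 = K_{a+1} ≤ K_a < ⋯ < K_1` with `K_j > K_{j+1}^a`, and `y₁ ≥ ⋯ ≥ y_a > 0` with
`y_a > K_1 + 1`, setting `ξ_j = y_j/y_{j+1}` (`j < a`) and `ξ_a = y_a`, there exist
`1 < l ≤ a+1` and a subset `I ⊆ {1,…,a}` containing `a` such that `ξ_j ≤ K_l` for
`j ∉ I` and `ξ_j > K_{l-1}` for `j ∈ I`. -/
theorem stmt6 (a : ℕ) (ha : 1 ≤ a) (K : ℕ → ℝ) (y : ℕ → ℝ)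
    (hK1 : K (a + 1) = 1)
    (hK2 : ∀ j, 1 ≤ j → j ≤ a → K (j + 1) ^ a < K j)
    (hy : ∀ j, 1 ≤ j → j ≤ a → 0 < y j)
    (hmono : ∀ j, 1 ≤ j → j < a → y (j + 1) ≤ y j)
    (hya : K 1 + 1 < y a) :
    ∃ l : ℕ, 1 < l ∧ l ≤ a + 1 ∧
      ∃ I : Finset ℕ, I ⊆ Finset.Icc 1 a ∧ a ∈ I ∧
        (∀ j ∈ Finset.Icc 1 a, j ∉ I →
          (if j = a then y a else y j / y (j + 1)) ≤ K l) ∧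
        (∀ j ∈ I, K (l - 1) < (if j = a then y a else y j / y (j + 1))) := by
  set ξ : ℕ → ℝ := fun j => if j = a then y a else y j / y (j + 1) with hξ
  -- K ≥ 1 on [1, a+1]
  have hKge : ∀ d, d ≤ a → 1 ≤ K (a + 1 - d) := by
    intro d
    induction d with
    | zero => intro _; simp [hK1]
    | succ d ih =>
      intro hd
      have h1 : 1 ≤ a - d := by omega
      have h2 : a - d ≤ a := Nat.sub_le a d
      have h3 := hK2 (a - d) h1 h2
      have heq : a - d + 1 = a + 1 - d := by omega
      have h4 : 1 ≤ K (a - d + 1) := by rw [heq]; exact ih (by omega)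
      have hpow : 1 ≤ K (a - d + 1) ^ a := one_le_pow₀ h4
      have : a + 1 - (d + 1) = a - d := by omega
      rw [this]
      linarith
  have hKge' : ∀ j, 1 ≤ j → j ≤ a + 1 → 1 ≤ K j := by
    intro j h1 h2
    have : j = a + 1 - (a + 1 - j) := by omega
    rw [this]
    exact hKge _ (by omega)
  -- K strictly decreasing steps
  have hstep : ∀ j, 1 ≤ j → j ≤ a → K (j + 1) < K j := by
    intro j h1 h2
    have h3 := hK2 j h1 h2
    have h4 : 1 ≤ K (j + 1) := hKge' _ (by omega) (by omega)
    have : K (j + 1) ≤ K (j + 1) ^ a := le_self_pow₀ h4 (by omega)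
    linarith
  have hanti : ∀ i j, 1 ≤ i → i ≤ j → j ≤ a + 1 → K j ≤ K i := by
    intro i j h1 h2 h3
    induction j with
    | zero => omega
    | succ j ih =>
      rcases Nat.lt_or_ge i (j + 1) with h | h
      · have hj1 : 1 ≤ j := by omega
        have := hstep j hj1 (by omega)
        have := ih (by omega) (by omega)
        linarith
      · have : i = j + 1 := by omega
        rw [this]
  -- pigeonhole: some interval (K l, K (l-1)] contains no ξ j
  have key : ∃ l ∈ Finset.Icc 2 (a + 1),
      ∀ j ∈ Finset.Icc 1 a, ¬(K l < ξ j ∧ ξ j ≤ K (l - 1)) := by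
    by_contra hcon
    push_neg at hcon
    have hcon' : ∀ l : ℕ, ∃ j : ℕ, l ∈ Finset.Icc 2 (a + 1) →
        (j ∈ Finset.Icc 1 a ∧ K l < ξ j ∧ ξ j ≤ K (l - 1)) := by
      intro l
      by_cases hl : l ∈ Finset.Icc 2 (a + 1)
      · obtain ⟨j, hj1, hj2, hj3⟩ := hcon l hl
        exact ⟨j, fun _ => ⟨hj1, hj2, hj3⟩⟩
      · exact ⟨1, fun h => absurd h hl⟩
    choose g hg using hcon'
    have hne : ∀ l ∈ Finset.Icc 2 (a + 1), g l ≠ a := by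
      intro l hl hEq
      obtain ⟨_, hg2, hg3⟩ := hg l hl
      simp only [Finset.mem_Icc] at hl
      have hKl1 : K (l - 1) ≤ K 1 := hanti 1 (l - 1) le_rfl (by omega) (by omega)
      have hξa : ξ a = y a := by simp [hξ]
      rw [hEq, hξa] at hg3
      linarith
    have hmaps : ∀ l ∈ Finset.Icc 2 (a + 1), g l ∈ Finset.Icc 1 (a - 1) := by
      intro l hl
      have h1 := (hg l hl).1
      have h2 := hne l hl
      simp only [Finset.mem_Icc] at h1 ⊢
      omega
    have hcard : (Finset.Icc 1 (a - 1)).card < (Finset.Icc 2 (a + 1)).card := by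
      rw [Nat.card_Icc, Nat.card_Icc]; omega
    obtain ⟨l, hl, l', hl', hne', heq⟩ :=
      Finset.exists_ne_map_eq_of_card_lt_of_maps_to hcard hmaps
    -- wlog l < l'
    wlog hlt : l < l' generalizing l l' hl hl'
    · exact this l' hl' l hl (Ne.symm hne') heq.symm (by omega)
    obtain ⟨_, h1, h2⟩ := hg l hl
    obtain ⟨_, h3, h4⟩ := hg l' hl'
    simp only [Finset.mem_Icc] at hl hl'
    rw [heq] at h1 h2
    have : K (l' - 1) ≤ K l := hanti l (l' - 1) (by omega) (by omega) (by omega)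
    linarith
  obtain ⟨l, hl, hempty⟩ := key
  simp only [Finset.mem_Icc] at hl
  refine ⟨l, by omega, by omega, (Finset.Icc 1 a).filter (fun j => K (l - 1) < ξ j),
    Finset.filter_subset _ _, ?_, ?_, ?_⟩
  · refine Finset.mem_filter.mpr ⟨Finset.mem_Icc.mpr ⟨ha, le_rfl⟩, ?_⟩
    have hKl1 : K (l - 1) ≤ K 1 := hanti 1 (l - 1) le_rfl (by omega) (by omega)
    have hξa : ξ a = y a := by simp [hξ]
    rw [hξa]
    linarith
  · intro j hj hjI
    have hle : ξ j ≤ K (l - 1) := by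
      by_contra h
      exact hjI (Finset.mem_filter.mpr ⟨hj, lt_of_not_ge h⟩)
    have := hempty j hj
    push_neg at this
    by_contra h
    exact absurd hle (not_le.mpr (this (lt_of_not_ge h)))
  · intro j hj
    exact (Finset.mem_filter.mp hj).2
end

section
/- Let U = Δ* × Δ^b ⊆ ℂ^{1+b} with coordinates (s, w), and let U′ be another such chart with coordinate s′ satisfying s = ξ s′ on the overlap, where ξ is a smooth nowhere-vanishing function bounded with bounded derivative, and |s|, |s′| ≤ 1/2. Then there is a constant C such that on any compact subset of the overlap, |1/(s log|s|)| ≤ C (|1/(s′ log|s′|)| + 1); consequently a differential form Poincaré bounded with respect to (s, w) is Poincaré bounded with respect to (s′, w′). -/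
/-- Key scalar estimate of Lemma 4.5 (coordinate-independence of Poincaré boundedness):
if `s = ξ s′` with `0 < c ≤ |ξ| ≤ C_b`, and `0 < |s|, |s′| ≤ 1/2`, then there is a
constant `C` (depending only on `c, C_b`) with
`1/(|s| log(1/|s|)) ≤ C (1/(|s′| log(1/|s′|)) + 1)`. -/
theorem stmt14 (c Cb : ℝ) (hc : 0 < c) (hcb : c ≤ Cb) :
    ∃ C : ℝ, ∀ s s' ξ : ℂ, s = ξ * s' →
      c ≤ ‖ξ‖ → ‖ξ‖ ≤ Cb →
      0 < ‖s‖ → ‖s‖ ≤ 1 / 2 → 0 < ‖s'‖ → ‖s'‖ ≤ 1 / 2 →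
      1 / (‖s‖ * Real.log (1 / ‖s‖)) ≤
        C * (1 / (‖s'‖ * Real.log (1 / ‖s'‖)) + 1) := by
  have hl2 : (0:ℝ) < Real.log 2 := Real.log_pos (by norm_num)
  have hCb : 0 < Cb := lt_of_lt_of_le hc hcb
  refine ⟨2/c + Cb^2/(c*Real.log 2), ?_⟩
  intro s s' ξ hst hc1 hc2 hx0 hx hy0 hy
  set x := ‖s‖ with hxdef
  set y := ‖s'‖ with hydef
  set t := ‖ξ‖ with htdef
  have htpos : 0 < t := lt_of_lt_of_le hc hc1
  have hxy : x = t * y := by rw [hxdef, hst, norm_mul]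
  set Lx := Real.log (1/x) with hLxdef
  set Ly := Real.log (1/y) with hLydef
  have hLx2 : Real.log 2 ≤ Lx := by
    apply Real.log_le_log (by norm_num)
    rw [le_div_iff₀ hx0]; linarith
  have hLy2 : Real.log 2 ≤ Ly := by
    apply Real.log_le_log (by norm_num)
    rw [le_div_iff₀ hy0]; linarith
  have hLxpos : 0 < Lx := lt_of_lt_of_le hl2 hLx2
  have hLypos : 0 < Ly := lt_of_lt_of_le hl2 hLy2
  have hlog : Lx = Ly - Real.log t := by
    rw [hLxdef, hLydef, hxy, one_div, mul_inv, Real.log_mul (by positivity) (by positivity),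
      Real.log_inv]
    ring
  have hCpos : 0 ≤ 2/c + Cb^2/(c*Real.log 2) := by positivity
  have hupos : 0 < 1/(y*Ly) := by positivity
  by_cases h : 2*Real.log Cb ≤ Ly
  · -- Lx ≥ Ly/2
    have hLt : Real.log t ≤ Real.log Cb := Real.log_le_log htpos hc2
    have hLx' : Ly/2 ≤ Lx := by rw [hlog]; linarith
    have h1 : 1/(x*Lx) ≤ 2/(c*(y*Ly)) := by
      rw [div_le_div_iff₀ (by positivity) (by positivity)]
      nlinarith [mul_le_mul hc1 hLx' (by positivity) htpos.le, hy0,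
        mul_pos hy0 hLypos]
    have hA : 0 < 2/c := by positivity
    have hB : 0 ≤ Cb^2/(c*Real.log 2) := by positivity
    calc 1/(x*Lx) ≤ 2/(c*(y*Ly)) := h1
      _ = (2/c) * (1/(y*Ly)) := by rw [mul_one_div, div_div]
      _ ≤ (2/c + Cb^2/(c*Real.log 2)) * (1/(y*Ly) + 1) := by
          nlinarith [mul_nonneg hB hupos.le, mul_pos hA hupos]
  · push_neg at h
    have hyb : 1/y < Cb^2 := by
      have h2 : Ly < Real.log (Cb^2) := by
        rw [Real.log_pow]; push_cast; linarith
      have := Real.exp_lt_exp.mpr h2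
      rwa [Real.exp_log (by positivity), Real.exp_log (by positivity)] at this
    have h1 : 1/(x*Lx) ≤ Cb^2/(c*Real.log 2) := by
      rw [div_le_div_iff₀ (by positivity) (by positivity)]
      have h1y : 1 < Cb^2 * y := (div_lt_iff₀ hy0).mp hyb
      have H1 : c*Real.log 2 ≤ t*Lx := mul_le_mul hc1 hLx2 hl2.le htpos.le
      have H2 : (Cb^2*y)*(c*Real.log 2) ≤ (Cb^2*y)*(t*Lx) :=
        mul_le_mul_of_nonneg_left H1 (by positivity)
      have H3 : 1*(c*Real.log 2) ≤ (Cb^2*y)*(c*Real.log 2) :=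
        mul_le_mul_of_nonneg_right h1y.le (by positivity)
      calc 1*(c*Real.log 2) ≤ (Cb^2*y)*(t*Lx) := le_trans H3 H2
        _ = Cb^2*((t*y)*Lx) := by ring
        _ = Cb^2*(x*Lx) := by rw [← hxy]
    have hA : 0 < 2/c := by positivity
    have hB : 0 ≤ Cb^2/(c*Real.log 2) := by positivity
    calc 1/(x*Lx) ≤ Cb^2/(c*Real.log 2) := h1
      _ ≤ (2/c + Cb^2/(c*Real.log 2)) * (1/(y*Ly) + 1) := by
          nlinarith [mul_nonneg hB hupos.le, mul_pos hA hupos]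
end
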